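/- Suppose the P-part is stably embedded in T (types over P(M) of tuples in M are uniformly definable over P(M)). Then for any model M of T and models N₁ ≺ N₂ of T^P with N₁ = M^P (inside a saturated model), the set M ∪ N₂ is complete. -/

import Mathlib

open FirstOrder FirstOrder.Language FirstOrder.Language.Structure

universe u v

namespace RelCatPaper

variable {L : FirstOrder.Language.{u, v}}

/-- The language is relational: no function symbols. -/
def Relational (L : FirstOrder.Language.{u, v}) : Prop := ∀ n, IsEmpty (L.Functions n)

/-- `T` has quantifier elimination. -/
def HasQE (T : L.Theory) : Prop :=
  ∀ (n : ℕ) (φ : L.Formula (Fin n)), ∃ ψ : L.Formula (Fin n), ψ.IsQF ∧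
    ∀ (M : Type (max u v)) [L.Structure M], M ⊨ T →
      ∀ v : Fin n → M, φ.Realize v ↔ ψ.Realize v

variable (p : L.Relations 1)

/-- The set of realizations of the distinguished unary predicate `p` in `M`. -/
def Pset (M : Type*) [L.Structure M] : Set M := {x | RelMap p ![x]}

/-- The `P`-part of `M` as a substructure (the language being relational). -/
def Psub (hrel : Relational L) (M : Type*) [L.Structure M] : L.Substructure M :=
  ⟨Pset p M, fun {n} f => (hrel n).elim f⟩

/-- `T` says that `P` is infinite. -/
def PInfinite (T : L.Theory) : Prop :=
  ∀ (M : Type (max u v)) [L.Structure M], M ⊨ T → (Pset p M).Infinite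

/-- A subset `A` of `M` is *complete*: any formula over `A` realized by an element of `P`
is realized by an element of `P ∩ A`. -/
def CompleteSet (M : Type*) [L.Structure M] (A : Set M) : Prop :=
  ∀ (n : ℕ) (φ : L.Formula (Fin 1 ⊕ Fin n)) (c : Fin n → M), (∀ i, c i ∈ A) →
    (∃ x : M, x ∈ Pset p M ∧ φ.Realize (Sum.elim (fun _ => x) c)) →
    ∃ b : M, b ∈ A ∧ b ∈ Pset p M ∧ φ.Realize (Sum.elim (fun _ => b) c)

/-- `tp(a/P(M))` is isolated (by a formula over `P(M)`). -/
def IsolatedOverP (M : Type*) [L.Structure M] {m : ℕ} (a : Fin m → M) : Prop :=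
  ∃ (n : ℕ) (φ : L.Formula (Fin m ⊕ Fin n)) (c : Fin n → M),
    (∀ i, c i ∈ Pset p M) ∧ φ.Realize (Sum.elim a c) ∧
    ∀ (k : ℕ) (ψ : L.Formula (Fin m ⊕ Fin k)) (d : Fin k → M), (∀ i, d i ∈ Pset p M) →
      ψ.Realize (Sum.elim a d) →
      ∀ a' : Fin m → M, φ.Realize (Sum.elim a' c) → ψ.Realize (Sum.elim a' d)

/-- `M` is atomic over its `P`-part. -/
def AtomicOverP (M : Type*) [L.Structure M] : Prop :=
  ∀ (m : ℕ) (a : Fin m → M), IsolatedOverP p M a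

/-- `T` is relatively `(ω,ω)`-categorical. -/
def RelativelyCatCC (hrel : Relational L) (T : L.Theory) : Prop :=
  ∀ (M₁ M₂ : Type (max u v)) [L.Structure M₁] [L.Structure M₂],
    M₁ ⊨ T → M₂ ⊨ T → Countable M₁ → Countable M₂ →
    ∀ f : (Psub p hrel M₁) ≃[L] (Psub p hrel M₂),
      ∃ g : M₁ ≃[L] M₂, ∀ x : Psub p hrel M₁, g (x : M₁) = (f x : M₂)

/-- `T` is relatively `ω`-categorical (the `P`-parts are countable). -/
def RelativelyCatOmega (hrel : Relational L) (T : L.Theory) : Prop :=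
  ∀ (M₁ M₂ : Type (max u v)) [L.Structure M₁] [L.Structure M₂],
    M₁ ⊨ T → M₂ ⊨ T → Countable (Psub p hrel M₁) → Countable (Psub p hrel M₂) →
    ∀ f : (Psub p hrel M₁) ≃[L] (Psub p hrel M₂),
      ∃ g : M₁ ≃[L] M₂, ∀ x : Psub p hrel M₁, g (x : M₁) = (f x : M₂)

/-- `T` is relatively categorical. -/
def RelativelyCat (hrel : Relational L) (T : L.Theory) : Prop :=
  ∀ (M₁ M₂ : Type (max u v)) [L.Structure M₁] [L.Structure M₂],
    M₁ ⊨ T → M₂ ⊨ T →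
    ∀ f : (Psub p hrel M₁) ≃[L] (Psub p hrel M₂),
      ∃ g : M₁ ≃[L] M₂, ∀ x : Psub p hrel M₁, g (x : M₁) = (f x : M₂)

/-- `TP` is the common complete theory of the `P`-parts of models of `T`. -/
def IsPTheory (hrel : Relational L) (T TP : L.Theory) : Prop :=
  TP.IsComplete ∧
    ∀ (M : Type (max u v)) [L.Structure M], M ⊨ T → (Psub p hrel M : Type (max u v)) ⊨ TP

/-- `x` is algebraic over `A` in `M`. -/
def InAcl (M : Type*) [L.Structure M] (A : Set M) (x : M) : Prop :=
  ∃ (n : ℕ) (φ : L.Formula (Fin 1 ⊕ Fin n)) (c : Fin n → M), (∀ i, c i ∈ A) ∧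
    φ.Realize (Sum.elim (fun _ => x) c) ∧
    {y : M | φ.Realize (Sum.elim (fun _ => y) c)}.Finite

/-- `M` is almost internal to `P`: `M ⊆ acl(P(M) ∪ a)` for some finite tuple `a`. -/
def AlmostInternal (M : Type*) [L.Structure M] : Prop :=
  ∃ (m : ℕ) (a : Fin m → M), ∀ x : M, InAcl (L := L) M (Pset p M ∪ Set.range a) x

/-- `M` is `1`-coanalyzable in `P`: there is a definable relation `R ⊆ M × P^ℓ`
projecting onto `M` with all fibers over tuples from `P` finite. -/
def OneCoanalyzable (M : Type*) [L.Structure M] : Prop :=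
  ∃ (ℓ n : ℕ) (φ : L.Formula ((Fin 1 ⊕ Fin ℓ) ⊕ Fin n)) (e : Fin n → M),
    (∀ x : M, ∃ c : Fin ℓ → M, (∀ i, c i ∈ Pset p M) ∧
      φ.Realize (Sum.elim (Sum.elim (fun _ => x) c) e)) ∧
    ∀ c : Fin ℓ → M, (∀ i, c i ∈ Pset p M) →
      {x : M | φ.Realize (Sum.elim (Sum.elim (fun _ => x) c) e)}.Finite

/-- `M` is saturated: every finitely realized set of formulas in one variable over fewer
than `#M` parameters is realized. -/
def IsSaturated (M : Type w) [L.Structure M] : Prop :=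
  ∀ (ι : Type w), Cardinal.mk ι < Cardinal.mk M → ∀ (c : ι → M)
    (Φ : Set (L.Formula (Fin 1 ⊕ ι))),
    (∀ Φ₀ : Finset (L.Formula (Fin 1 ⊕ ι)), ↑Φ₀ ⊆ Φ →
      ∃ x : M, ∀ φ ∈ Φ₀, Formula.Realize φ (Sum.elim (fun _ => x) c)) →
    ∃ x : M, ∀ φ ∈ Φ, Formula.Realize φ (Sum.elim (fun _ => x) c)

/-- Types over the `P`-part are uniformly definable (stable embeddedness of `P`). -/
def StablyEmbedded (T : L.Theory) : Prop :=
  ∀ (m k : ℕ) (ψ : L.Formula (Fin m ⊕ Fin k)),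
    ∃ (n : ℕ) (χ : L.Formula (Fin k ⊕ Fin n)),
      ∀ (M : Type (max u v)) [L.Structure M], M ⊨ T →
        ∀ a : Fin m → M, ∃ c : Fin n → M, (∀ i, c i ∈ Pset p M) ∧
          ∀ b : Fin k → M, (∀ i, b i ∈ Pset p M) →
            (ψ.Realize (Sum.elim a b) ↔ χ.Realize (Sum.elim b c))


/-- `M` is `ℵ₁`-saturated (countably saturated). -/
def CountablySaturated (M : Type w) [L.Structure M] : Prop :=
  ∀ (c : ℕ → M) (Φ : Set (L.Formula (Fin 1 ⊕ ℕ))),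
    (∀ Φ₀ : Finset (L.Formula (Fin 1 ⊕ ℕ)), ↑Φ₀ ⊆ Φ →
      ∃ x : M, ∀ φ ∈ Φ₀, Formula.Realize φ (Sum.elim (fun _ => x) c)) →
    ∃ x : M, ∀ φ ∈ Φ, Formula.Realize φ (Sum.elim (fun _ => x) c)

/-- `(T,P)` is `1`-cardinal: every model of `T` has the same cardinality as its `P`-part. -/
def OneCardinal (T : L.Theory) : Prop :=
  ∀ (M : Type (max u v)) [L.Structure M], M ⊨ T → Cardinal.mk M = Cardinal.mk (Pset p M)


section Aux

variable {L : FirstOrder.Language.{u, v}}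

/-- The guarded equivalence formula used in the proof: it says that for all tuples `w`
from `P`, `ψ(a, w)` holds iff `χ(w, c')` holds. -/
noncomputable def pGuard (p : L.Relations 1) {n k n' : ℕ}
    (ψ : L.Formula (Fin n ⊕ Fin k)) (χ : L.Formula (Fin k ⊕ Fin n')) :
    L.Formula (Fin n ⊕ Fin n') :=
  Formula.iAlls (Fin k)
    ((BoundedFormula.iInf fun j : Fin k =>
        p.formula₁ (Term.var (Sum.inr j))).imp
      ((ψ.relabel (Sum.elim (fun i => Sum.inl (Sum.inl i)) Sum.inr)).iff
        (χ.relabel (Sum.elim Sum.inr (fun j => Sum.inl (Sum.inr j))))))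

lemma realize_pGuard (p : L.Relations 1) {X : Type*} [L.Structure X] {n k n' : ℕ}
    (ψ : L.Formula (Fin n ⊕ Fin k)) (χ : L.Formula (Fin k ⊕ Fin n'))
    (a : Fin n → X) (c' : Fin n' → X) :
    (pGuard p ψ χ).Realize (Sum.elim a c') ↔
      ∀ w : Fin k → X, (∀ j, RelMap p ![w j]) →
        (ψ.Realize (Sum.elim a w) ↔ χ.Realize (Sum.elim w c')) := by
  rw [pGuard, Formula.realize_iAlls]
  refine forall_congr' fun w => ?_
  have hv : (fun s => Sum.elim (Sum.elim a c') w s) = Sum.elim (Sum.elim a c') w :=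
    funext fun s => rfl
  rw [hv, Formula.realize_imp, Formula.realize_iff, Formula.realize_relabel,
    Formula.realize_relabel]
  have h1 : (Sum.elim (Sum.elim a c') w) ∘
      (Sum.elim (fun i => Sum.inl (Sum.inl i)) Sum.inr : Fin n ⊕ Fin k → _) =
      Sum.elim a w :=
    funext fun s => by cases s <;> rfl
  have h2 : (Sum.elim (Sum.elim a c') w) ∘
      (Sum.elim Sum.inr (fun j => Sum.inl (Sum.inr j)) : Fin k ⊕ Fin n' → _) =
      Sum.elim w c' :=
    funext fun s => by cases s <;> rfl
  rw [h1, h2]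
  refine imp_congr ?_ Iff.rfl
  rw [Formula.Realize, BoundedFormula.realize_iInf]
  refine forall_congr' fun j => ?_
  rw [show (BoundedFormula.Realize (p.formula₁ (Term.var (Sum.inr j)))
      (Sum.elim (Sum.elim a c') w) default ↔ RelMap p ![w j]) from Formula.realize_rel₁]

lemma pset_coe_es {X : Type*} [L.Structure X] (p : L.Relations 1)
    (S : L.ElementarySubstructure X) (x : S) (h : x ∈ Pset p S) : (x : X) ∈ Pset p X := by
  have hv : (fun i => ((![x] : Fin 1 → S) i : X)) = ![(x : X)] :=
    funext fun i => by fin_cases i <;> rfl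
  show RelMap p ![(x : X)]
  rw [← hv]
  exact h

end Aux

/-- if P is stably embedded, M a model of T inside a saturated model,
and N₁ ≺ N₂ models of T^P with N₁ = M^P, then M ∪ N₂ is complete. -/
theorem union_complete_of_stablyEmbedded
    {L : FirstOrder.Language.{u, v}} [Countable L.Symbols]
    (p : L.Relations 1) (hrel : Relational L)
    (T : L.Theory) (hcomp : T.IsComplete) (hqe : HasQE T) (hinf : PInfinite p T)
    (hse : StablyEmbedded p T)
    (Mbar : Type (max u v)) [L.Structure Mbar] (hMbar : Mbar ⊨ T)
    (hsat : IsSaturated (L := L) Mbar)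
    (M : L.ElementarySubstructure Mbar)
    (N₁ N₂ : L.ElementarySubstructure (Psub p hrel Mbar))
    (h12 : (N₁ : Set (Psub p hrel Mbar)) ⊆ (N₂ : Set (Psub p hrel Mbar)))
    (hMP : (M : Set Mbar) ∩ Pset p Mbar =
      Subtype.val '' (N₁ : Set (Psub p hrel Mbar))) :
    CompleteSet p Mbar
      ((M : Set Mbar) ∪ Subtype.val '' (N₂ : Set (Psub p hrel Mbar))) := by
  classical
  haveI hTmod : Mbar ⊨ T := hMbar
  have hPne : (Pset p Mbar).Nonempty := (hinf Mbar hMbar).nonempty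
  haveI : Nonempty Mbar := ⟨hPne.choose⟩
  haveI hPsubNe : Nonempty (Psub p hrel Mbar) :=
    ⟨⟨hPne.choose, hPne.choose_spec⟩⟩
  intro n φ c hc hx
  obtain ⟨x₀, hx₀P, hx₀φ⟩ := hx
  -- split the parameters into an `M`-part and an `N₂`-part
  let a : Fin n → M := fun i => if h : c i ∈ M then ⟨c i, h⟩ else Classical.arbitrary M
  have ha : ∀ i, c i ∈ M → ((a i : Mbar)) = c i := by
    intro i h
    simp only [a, dif_pos h]
  have hbex : ∀ i, ∃ y : N₂, c i ∉ M →
      (((y : Psub p hrel Mbar) : Mbar)) = c i := by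
    intro i
    by_cases h : c i ∈ M
    · exact ⟨Classical.arbitrary _, fun h' => absurd h h'⟩
    · rcases hc i with hM | hN
      · exact absurd hM h
      · rcases hN with ⟨y, hy, hyv⟩
        exact ⟨⟨y, SetLike.mem_coe.1 hy⟩, fun _ => hyv⟩
  choose b hb using hbex
  -- the relabelling
  let r : Fin 1 ⊕ Fin n → Fin n ⊕ Fin (n + 1) :=
    Sum.elim (fun _ => Sum.inr 0)
      (fun i => if c i ∈ M then Sum.inl i else Sum.inr i.succ)
  let bb : Fin n → Mbar := fun j => ((b j : Psub p hrel Mbar) : Mbar)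
  have hbbP : ∀ j, bb j ∈ Pset p Mbar := fun j => ((b j : Psub p hrel Mbar)).2
  have hcomb : ∀ z : Mbar,
      (Sum.elim (fun i => (a i : Mbar)) (Fin.cases z bb) : Fin n ⊕ Fin (n + 1) → Mbar) ∘ r =
        Sum.elim (fun _ : Fin 1 => z) c := by
    intro z
    funext s
    rcases s with u | i
    · simp [r]
    · by_cases h : c i ∈ M
      · simp [r, h, ha i h]
      · simp [r, h, bb, hb i h]
  -- stable embeddedness applied inside M
  obtain ⟨n', χ, hχ⟩ := hse n (n + 1) (φ.relabel r)
  obtain ⟨c', hc'P, hc'⟩ := hχ M inferInstance a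
  -- the key transferred equivalence in Mbar
  have key : ∀ w : Fin (n + 1) → Mbar, (∀ j, RelMap p ![w j]) →
      ((φ.relabel r).Realize (Sum.elim (fun i => (a i : Mbar)) w) ↔
        χ.Realize (Sum.elim w (fun i => (c' i : Mbar)))) := by
    have h1 : (pGuard p (φ.relabel r) χ).Realize (Sum.elim a c') :=
      (realize_pGuard p _ _ a c').2 (fun w hw => hc' w (fun i => hw i))
    have h2 := (M.subtype.map_formula (pGuard p (φ.relabel r) χ) (Sum.elim a c')).2 h1
    have h3 : (⇑M.subtype ∘ Sum.elim a c') =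
        Sum.elim (fun i => (a i : Mbar)) (fun i => (c' i : Mbar)) :=
      funext fun s => by cases s <;> rfl
    rw [h3, realize_pGuard] at h2
    exact h2
  -- forward direction
  let w₀ : Fin (n + 1) → Mbar := Fin.cases x₀ bb
  have hw₀ : ∀ j, RelMap p ![w₀ j] := by
    intro j
    refine Fin.cases ?_ ?_ j
    · exact hx₀P
    · intro i; exact hbbP i
  have hψ₀ : (φ.relabel r).Realize (Sum.elim (fun i => (a i : Mbar)) w₀) := by
    rw [Formula.realize_relabel, hcomb x₀]
    exact hx₀φ
  have hχ₀ : χ.Realize (Sum.elim w₀ (fun i => (c' i : Mbar))) := (key w₀ hw₀).1 hψ₀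
  -- quantifier elimination for χ
  obtain ⟨χq, hqf, hq⟩ := hqe ((n + 1) + n') (χ.relabel finSumFinEquiv)
  have hqMbar := hq Mbar hMbar
  have hqχ : ∀ v : Fin (n + 1) ⊕ Fin n' → Mbar,
      χ.Realize v ↔ χq.Realize (v ∘ finSumFinEquiv.symm) := by
    intro v
    rw [← hqMbar, Formula.realize_relabel]
    have : (v ∘ ⇑finSumFinEquiv.symm) ∘ ⇑finSumFinEquiv = v :=
      funext fun s => by simp
    rw [this]
  have hXmbar : χq.Realize ((Sum.elim w₀ (fun i => (c' i : Mbar))) ∘ finSumFinEquiv.symm) :=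
    (hqχ _).1 hχ₀
  -- move down into the P-part
  let wP : Fin (n + 1) → Psub p hrel Mbar := Fin.cases ⟨x₀, hx₀P⟩ (fun j => (b j : Psub p hrel Mbar))
  let cP : Fin n' → Psub p hrel Mbar := fun i =>
    ⟨(c' i : Mbar), pset_coe_es p M (c' i) (hc'P i)⟩
  have hval0 : (fun s => (Sum.elim wP cP s).val) =
      Sum.elim w₀ (fun i => (c' i : Mbar)) := by
    funext s
    rcases s with j | i
    · refine Fin.cases ?_ (fun i => ?_) j <;> simp [wP, w₀, bb]
    · rfl
  have hdown : ∀ (u : (Fin ((n + 1) + n')) → Psub p hrel Mbar),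
      χq.Realize (fun k => (u k).val) ↔ χq.Realize u := by
    intro u
    have := hqf.realize_embedding (Psub p hrel Mbar).subtype
      (v := u) (xs := (default : Fin 0 → Psub p hrel Mbar))
    rw [show (⇑(Psub p hrel Mbar).subtype ∘ (default : Fin 0 → Psub p hrel Mbar)) =
        (default : Fin 0 → Mbar) from Subsingleton.elim _ _] at this
    exact this
  have hPsubR : χq.Realize ((Sum.elim wP cP) ∘ finSumFinEquiv.symm) := by
    refine (hdown _).1 ?_
    have : (fun k => ((Sum.elim wP cP ∘ finSumFinEquiv.symm) k).val) =
        (Sum.elim w₀ (fun i => (c' i : Mbar))) ∘ finSumFinEquiv.symm := by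
      funext k
      exact congrFun hval0 (finSumFinEquiv.symm k)
    rw [this]
    exact hXmbar
  -- the existential formula with parameters from N₂
  let ρ : Fin ((n + 1) + n') → (Fin n ⊕ Fin n') ⊕ Fin 1 := fun k =>
    Sum.elim (fun j : Fin (n + 1) =>
        Fin.cases (Sum.inr 0) (fun i => Sum.inl (Sum.inl i)) j)
      (fun i => Sum.inl (Sum.inr i)) (finSumFinEquiv.symm k)
  let Ex : L.Formula (Fin n ⊕ Fin n') := Formula.iExs (Fin 1) (χq.relabel ρ)
  let vP : Fin n ⊕ Fin n' → Psub p hrel Mbar :=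
    Sum.elim (fun j => (b j : Psub p hrel Mbar)) cP
  have hvPelim : ∀ yy : Psub p hrel Mbar,
      (fun k => Sum.elim vP (fun _ : Fin 1 => yy) (ρ k)) =
        Sum.elim (Fin.cases yy (fun j => (b j : Psub p hrel Mbar))) cP ∘ finSumFinEquiv.symm := by
    intro yy
    funext k
    simp only [ρ, Function.comp_apply]
    rcases h : finSumFinEquiv.symm k with j | i
    · refine Fin.cases ?_ (fun i => ?_) j <;> simp [vP]
    · rfl
  have hExP : Ex.Realize vP := by
    rw [Formula.realize_iExs]
    refine ⟨fun _ => ⟨x₀, hx₀P⟩, ?_⟩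
    rw [Formula.realize_relabel, Function.comp_def, hvPelim]
    exact hPsubR
  -- the parameters lie in N₂
  have hcPN₂ : ∀ i, cP i ∈ N₂ := by
    intro i
    have hmem : ((c' i : Mbar)) ∈ (M : Set Mbar) ∩ Pset p Mbar :=
      ⟨(c' i).2, pset_coe_es p M (c' i) (hc'P i)⟩
    rw [hMP] at hmem
    obtain ⟨y, hy, hyv⟩ := hmem
    have : cP i = y := Subtype.ext hyv.symm
    rw [this]
    exact SetLike.mem_coe.1 (h12 hy)
  let vN : Fin n ⊕ Fin n' → N₂ := Sum.elim b (fun i => ⟨cP i, hcPN₂ i⟩)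
  have hvP : (⇑N₂.subtype) ∘ vN = vP := funext fun s => by cases s <;> rfl
  have hExN : Ex.Realize vN :=
    (N₂.subtype.map_formula Ex vN).1 (by rw [hvP]; exact hExP)
  rw [Formula.realize_iExs] at hExN
  obtain ⟨iw, hiw⟩ := hExN
  rw [Formula.realize_relabel] at hiw
  let yP : Psub p hrel Mbar := ↑(iw 0)
  let y : Mbar := ↑yP
  -- transfer the witness back up
  have h1 : χq.Realize (fun k => Sum.elim vP (fun _ : Fin 1 => yP) (ρ k)) := by
    have hcm : ⇑N₂.subtype ∘ (fun k => Sum.elim vN iw (ρ k)) =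
        fun k => Sum.elim vP (fun _ : Fin 1 => yP) (ρ k) := by
      funext k
      rcases hρ : ρ k with s | u
      · simp only [Function.comp_apply, hρ, Sum.elim_inl]
        exact congrFun hvP s
      · simp only [Function.comp_apply, hρ, Sum.elim_inr]
        have : u = 0 := Subsingleton.elim _ _
        rw [this]
        rfl
    have := (N₂.subtype.map_formula χq (fun k => Sum.elim vN iw (ρ k))).2 hiw
    rwa [hcm] at this
  let w₁ : Fin (n + 1) → Mbar := Fin.cases y bb
  have h2 : χq.Realize ((Sum.elim w₁ (fun i => (c' i : Mbar))) ∘ finSumFinEquiv.symm) := by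
    have := (hdown _).2 h1
    have heq : (fun k => ((fun k' => Sum.elim vP (fun _ : Fin 1 => yP) (ρ k')) k).val) =
        (Sum.elim w₁ (fun i => (c' i : Mbar))) ∘ finSumFinEquiv.symm := by
      funext k
      simp only [ρ, Function.comp_apply]
      rcases hk : finSumFinEquiv.symm k with j | i
      · refine Fin.cases ?_ (fun i' => ?_) j <;> simp [vP, w₁, yP, y, bb]
      · rfl
    rwa [heq] at this
  have h3 : χ.Realize (Sum.elim w₁ (fun i => (c' i : Mbar))) := (hqχ _).2 h2
  have hw₁ : ∀ j, RelMap p ![w₁ j] := by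
    intro j
    refine Fin.cases ?_ ?_ j
    · have hy' : y ∈ Pset p Mbar := yP.2
      exact hy'
    · intro i; exact hbbP i
  have hψ₁ := (key w₁ hw₁).2 h3
  rw [Formula.realize_relabel, hcomb y] at hψ₁
  have hy' : y ∈ Pset p Mbar := yP.2
  exact ⟨y, Or.inr ⟨yP, SetLike.mem_coe.2 (iw 0).2, rfl⟩, hy', hψ₁⟩


end RelCatPaper
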